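/- arXiv:2206.06954 — 2 statements merged into one kernel-verified Lean document; each statement's English description precedes it below -/
import Mathlib

section
/- For θ > 1, the supremum over graphs G with maximum clique size k and unit-ℓ¹-norm vectors f of Σ_{i∼j} |f_i|^θ|f_j|^θ equals φ_θ(k), i.e., the supremum is attained when G is the complete graph on k vertices. -/
open scoped Classical
open Finset

/-- `φ_θ(k) = sup { ∑_{i ≠ j} |v i|^θ |v j|^θ : v ∈ ℝ^k, ‖v‖₁ = 1 }`. -/
noncomputable def phiVar (θ : ℝ) (k : ℕ) : ℝ :=
  ⨆ v : {v : Fin k → ℝ // ∑ i, |v i| = 1},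
    ∑ i : Fin k, ∑ j : Fin k, if i ≠ j then |v.1 i| ^ θ * |v.1 j| ^ θ else 0

lemma superadd {θ : ℝ} (hθ : 1 ≤ θ) {x y : ℝ} (hx : 0 ≤ x) (hy : 0 ≤ y) :
    x ^ θ + y ^ θ ≤ (x + y) ^ θ := by
  lift x to NNReal using hx with x
  lift y to NNReal using hy with y
  exact_mod_cast NNReal.add_rpow_le_rpow_add x y hθ

lemma bddrange {θ : ℝ} (hθ1 : 1 < θ) (k : ℕ) :
    BddAbove (Set.range fun v : {v : Fin k → ℝ // ∑ i, |v i| = 1} =>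
      ∑ i : Fin k, ∑ j : Fin k, if i ≠ j then |v.1 i| ^ θ * |v.1 j| ^ θ else 0) := by
  refine ⟨(k : ℝ) * k, ?_⟩
  rintro x ⟨v, rfl⟩
  have hb : ∀ i : Fin k, |v.1 i| ≤ 1 := by
    intro i
    calc |v.1 i| ≤ ∑ j, |v.1 j| :=
          Finset.single_le_sum (f := fun j => |v.1 j|) (fun j _ => abs_nonneg _) (mem_univ i)
      _ = 1 := v.2
  have hθ0 : (0:ℝ) ≤ θ := le_of_lt (lt_trans one_pos hθ1)
  calc (∑ i : Fin k, ∑ j : Fin k, if i ≠ j then |v.1 i| ^ θ * |v.1 j| ^ θ else 0)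
      ≤ ∑ _i : Fin k, ∑ _j : Fin k, (1:ℝ) := by
        refine sum_le_sum fun i _ => sum_le_sum fun j _ => ?_
        split
        · exact mul_le_one₀ (Real.rpow_le_one (abs_nonneg _) (hb i) hθ0)
            (Real.rpow_nonneg (abs_nonneg _) _)
            (Real.rpow_le_one (abs_nonneg _) (hb j) hθ0)
        · exact zero_le_one
    _ = (k : ℝ) * k := by simp [mul_comm]

lemma pad {θ : ℝ} (hθ1 : 1 < θ) {k d : ℕ} (hd : d ≤ k) (w : Fin d → ℝ)
    (hw : ∑ t, |w t| = 1) :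
    (∑ t : Fin d, ∑ t' : Fin d, if t ≠ t' then |w t| ^ θ * |w t'| ^ θ else 0) ≤ phiVar θ k := by
  set W : ℕ → ℝ := fun i => if h : i < d then w ⟨i, h⟩ else 0 with hW
  have hWd : ∀ t : Fin d, W t.val = w t := fun t => by simp [hW, t.isLt]
  have hW0 : ∀ i, d ≤ i → W i = 0 := fun i hi => by
    rw [hW]; exact dif_neg (by omega)
  have h1 : ∀ g : ℕ → ℝ, (∀ i, d ≤ i → g i = 0) →
      ∑ t : Fin k, g t.val = ∑ t : Fin d, g t.val := by
    intro g hg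
    rw [Fin.sum_univ_eq_sum_range g k, Fin.sum_univ_eq_sum_range g d]
    exact (Finset.sum_subset (Finset.range_subset_range.2 hd)
      fun i _ hi => hg i (by simpa using hi)).symm
  set v : Fin k → ℝ := fun t => W t.val with hv
  have hvsum : ∑ t : Fin k, |v t| = 1 := by
    have h := h1 (fun i => |W i|) (fun i hi => by show |W i| = 0; rw [hW0 i hi, abs_zero])
    calc ∑ t : Fin k, |v t| = ∑ t : Fin d, |W t.val| := h
      _ = ∑ t : Fin d, |w t| := by
          exact Finset.sum_congr rfl fun t _ => by rw [hWd]
      _ = 1 := hw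
  set Q : ℕ → ℕ → ℝ := fun i j => if i ≠ j then |W i| ^ θ * |W j| ^ θ else 0 with hQ
  have hz : ∀ i, d ≤ i → |W i| ^ θ = 0 := fun i hi => by
    rw [hW0 i hi, abs_zero, Real.zero_rpow (by linarith)]
  have hQl : ∀ i j, d ≤ i → Q i j = 0 := by
    intro i j hi
    rw [hQ]; dsimp only
    split
    · rw [hz i hi, zero_mul]
    · rfl
  have hQr : ∀ i j, d ≤ j → Q i j = 0 := by
    intro i j hj
    rw [hQ]; dsimp only
    split
    · rw [hz j hj, mul_zero]
    · rfl
  have hfin : ∀ (n : ℕ) (x : Fin n → ℝ) (hx : ∀ t, x t = W t.val),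
      (∑ t : Fin n, ∑ t' : Fin n, if t ≠ t' then |x t| ^ θ * |x t'| ^ θ else 0)
        = ∑ t : Fin n, ∑ t' : Fin n, Q t.val t'.val := by
    intro n x hx
    refine Finset.sum_congr rfl fun t _ => Finset.sum_congr rfl fun t' _ => ?_
    rw [hQ]; dsimp only
    by_cases h : t = t'
    · simp [h]
    · rw [if_pos h, if_pos (fun hh => h (Fin.val_injective hh)), hx, hx]
  have key : (∑ t : Fin d, ∑ t' : Fin d, if t ≠ t' then |w t| ^ θ * |w t'| ^ θ else 0)
      = ∑ t : Fin k, ∑ t' : Fin k, if t ≠ t' then |v t| ^ θ * |v t'| ^ θ else 0 := by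
    rw [hfin d w (fun t => (hWd t).symm), hfin k v (fun t => rfl)]
    rw [h1 (fun i => ∑ t' : Fin k, Q i t'.val)
      (fun i hi => by exact Finset.sum_eq_zero fun t' _ => hQl i _ hi)]
    exact Finset.sum_congr rfl fun t _ =>
      (h1 (fun j => Q t.val j) (fun j hj => hQr _ j hj)).symm
  rw [key]
  exact le_ciSup (bddrange hθ1 k) (⟨v, hvsum⟩ : {v : Fin k → ℝ // ∑ i, |v i| = 1})

lemma cliquecase {θ : ℝ} (hθ1 : 1 < θ) {k m : ℕ} (G : SimpleGraph (Fin m))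
    (hG : ∀ s : Finset (Fin m), G.IsClique (s : Set (Fin m)) → s.card ≤ k)
    (a : Fin m → ℝ) (ha : ∀ i, 0 ≤ a i) (h1 : ∑ i, a i = 1)
    (hcl : G.IsClique ((univ.filter (fun i => a i ≠ 0) : Finset (Fin m)) : Set (Fin m))) :
    (∑ i, ∑ j, if G.Adj i j then a i ^ θ * a j ^ θ else 0) ≤ phiVar θ k := by
  set s : Finset (Fin m) := univ.filter (fun i => a i ≠ 0) with hs
  have hs0 : ∀ u, u ∉ s → a u = 0 := by
    intro u hu
    by_contra h
    exact hu (mem_filter.2 ⟨mem_univ u, h⟩)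
  have hθ0 : θ ≠ 0 := by linarith
  have hz : ∀ u, u ∉ s → a u ^ θ = 0 := fun u hu => by
    rw [hs0 u hu, Real.zero_rpow hθ0]
  have hd : s.card ≤ k := hG s hcl
  set e := s.orderIsoOfFin rfl with he
  set w : Fin s.card → ℝ := fun t => a ((e t : {x // x ∈ s}) : Fin m) with hwdef
  have hwnn : ∀ t, |w t| = w t := fun t => abs_of_nonneg (ha _)
  have hwsum : ∑ t, |w t| = 1 := by
    calc ∑ t, |w t| = ∑ t, w t := Finset.sum_congr rfl fun t _ => hwnn t
      _ = ∑ u : {x // x ∈ s}, a u :=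
          Fintype.sum_equiv e.toEquiv _ _ (fun t => rfl)
      _ = ∑ u ∈ s, a u := Finset.sum_coe_sort s a
      _ = ∑ u, a u := Finset.sum_subset (subset_univ s) (fun u _ hu => hs0 u hu)
      _ = 1 := h1
  have step2 : (∑ i, ∑ j, if G.Adj i j then a i ^ θ * a j ^ θ else 0)
      ≤ ∑ u ∈ s, ∑ v ∈ s, if u ≠ v then a u ^ θ * a v ^ θ else 0 := by
    have hcoleq : ∀ u : Fin m,
        (∑ v, if G.Adj u v then a u ^ θ * a v ^ θ else 0)
          = ∑ v ∈ s, if G.Adj u v then a u ^ θ * a v ^ θ else 0 := by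
      intro u
      refine (Finset.sum_subset (subset_univ s) fun v _ hv => ?_).symm
      split
      · rw [hz v hv, mul_zero]
      · rfl
    have hroweq : (∑ i, ∑ j, if G.Adj i j then a i ^ θ * a j ^ θ else 0)
        = ∑ u ∈ s, ∑ v ∈ s, if G.Adj u v then a u ^ θ * a v ^ θ else 0 := by
      rw [← Finset.sum_subset (subset_univ s) (fun u _ hu => ?_)]
      · exact Finset.sum_congr rfl fun u _ => hcoleq u
      · refine Finset.sum_eq_zero fun v _ => ?_
        split
        · rw [hz u hu, zero_mul]
        · rfl
    rw [hroweq]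
    refine Finset.sum_le_sum fun u _ => Finset.sum_le_sum fun v _ => ?_
    by_cases h : G.Adj u v
    · rw [if_pos h, if_pos h.ne]
    · rw [if_neg h]
      split
      · exact mul_nonneg (Real.rpow_nonneg (ha u) θ) (Real.rpow_nonneg (ha v) θ)
      · exact le_refl 0
  have step3 : (∑ u ∈ s, ∑ v ∈ s, if u ≠ v then a u ^ θ * a v ^ θ else 0)
      = ∑ t : Fin s.card, ∑ t' : Fin s.card, if t ≠ t' then |w t| ^ θ * |w t'| ^ θ else 0 := by
    have hinj : Function.Injective (fun t : Fin s.card => ((e t : {x // x ∈ s}) : Fin m)) :=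
      fun t t' h => e.injective (Subtype.coe_injective h)
    calc (∑ u ∈ s, ∑ v ∈ s, if u ≠ v then a u ^ θ * a v ^ θ else 0)
        = ∑ u : {x // x ∈ s}, ∑ v : {x // x ∈ s},
            if (u : Fin m) ≠ (v : Fin m) then a u ^ θ * a v ^ θ else 0 := by
          rw [← Finset.sum_coe_sort s (fun u => ∑ v ∈ s, if u ≠ v then a u ^ θ * a v ^ θ else 0)]
          exact Finset.sum_congr rfl fun u _ =>
            (Finset.sum_coe_sort s (fun v => if (u : Fin m) ≠ v then a u ^ θ * a v ^ θ else 0)).symm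
      _ = ∑ t : Fin s.card, ∑ t' : Fin s.card,
            if ((e t : {x // x ∈ s}) : Fin m) ≠ ((e t' : {x // x ∈ s}) : Fin m)
            then a (e t) ^ θ * a (e t') ^ θ else 0 := by
          have houter : ∀ X : {x // x ∈ s} → ℝ,
              ∑ u : {x // x ∈ s}, X u = ∑ t : Fin s.card, X (e t) :=
            fun X => (Equiv.sum_comp e.toEquiv X).symm
          rw [houter]
          exact Finset.sum_congr rfl fun t _ => houter _
      _ = ∑ t : Fin s.card, ∑ t' : Fin s.card, if t ≠ t' then |w t| ^ θ * |w t'| ^ θ else 0 := by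
          refine Finset.sum_congr rfl fun t _ => Finset.sum_congr rfl fun t' _ => ?_
          rw [hwnn, hwnn]
          by_cases h : t = t'
          · simp [h]
          · rw [if_pos (fun hh => h (hinj hh)), if_pos h]
  calc (∑ i, ∑ j, if G.Adj i j then a i ^ θ * a j ^ θ else 0)
      ≤ ∑ u ∈ s, ∑ v ∈ s, if u ≠ v then a u ^ θ * a v ^ θ else 0 := step2
    _ = _ := step3
    _ ≤ phiVar θ k := pad hθ1 hd w hwsum

lemma decomp {θ : ℝ} {m : ℕ} (G : SimpleGraph (Fin m)) {i j : Fin m}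
    (hne : i ≠ j) (hnadj : ¬ G.Adj i j) (a x : Fin m → ℝ)
    (hx : ∀ v, v ≠ i → v ≠ j → x v = a v) :
    (∑ u, ∑ v, if G.Adj u v then x u ^ θ * x v ^ θ else 0)
      = 2 * x i ^ θ * (∑ v, if G.Adj i v then a v ^ θ else 0)
        + 2 * x j ^ θ * (∑ v, if G.Adj j v then a v ^ θ else 0)
        + ∑ u ∈ univ \ {i, j}, ∑ v ∈ univ \ {i, j},
            if G.Adj u v then a u ^ θ * a v ^ θ else 0 := by
  set T : Finset (Fin m) := univ \ {i, j} with hTdef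
  have hT : ∀ u, u ∈ T ↔ u ≠ i ∧ u ≠ j := by
    intro u
    simp [hTdef, not_or]
  have hsplit : ∀ g : Fin m → ℝ, ∑ u, g u = ∑ u ∈ T, g u + (g i + g j) := by
    intro g
    rw [← Finset.sum_sdiff (Finset.subset_univ ({i, j} : Finset (Fin m)))]
    congr 1
    exact Finset.sum_pair hne
  set S : Fin m → ℝ := fun u => ∑ v, if G.Adj u v then a v ^ θ else 0 with hSdef
  have hTa : ∀ u ∈ T, x u = a u := fun u hu => hx u ((hT u).1 hu).1 ((hT u).1 hu).2
  have hSx : ∀ u, ¬ G.Adj u i → ¬ G.Adj u j →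
      (∑ v, if G.Adj u v then x v ^ θ else 0) = S u := by
    intro u hui huj
    refine Finset.sum_congr rfl fun v _ => ?_
    by_cases hv : G.Adj u v
    · rw [if_pos hv, if_pos hv, hx v (fun h => hui (h ▸ hv)) (fun h => huj (h ▸ hv))]
    · rw [if_neg hv, if_neg hv]
  have hrow : ∀ u, (∑ v, if G.Adj u v then x u ^ θ * x v ^ θ else 0)
      = x u ^ θ * ∑ v, if G.Adj u v then x v ^ θ else 0 := by
    intro u
    rw [Finset.mul_sum]
    exact Finset.sum_congr rfl fun v _ => by rw [mul_ite, mul_zero]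
  have hrowi : (∑ v, if G.Adj i v then x i ^ θ * x v ^ θ else 0) = x i ^ θ * S i := by
    rw [hrow, hSx i (G.irrefl) hnadj]
  have hrowj : (∑ v, if G.Adj j v then x j ^ θ * x v ^ θ else 0) = x j ^ θ * S j := by
    rw [hrow, hSx j (fun h => hnadj h.symm) (G.irrefl)]
  have hinner : ∀ u ∈ T, (∑ v, if G.Adj u v then x u ^ θ * x v ^ θ else 0)
      = (∑ v ∈ T, if G.Adj u v then a u ^ θ * a v ^ θ else 0)
        + ((if G.Adj u i then a u ^ θ * x i ^ θ else 0)
          + (if G.Adj u j then a u ^ θ * x j ^ θ else 0)) := by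
    intro u hu
    rw [hsplit (fun v => if G.Adj u v then x u ^ θ * x v ^ θ else 0)]
    congr 1
    · refine Finset.sum_congr rfl fun v hv => ?_
      rw [hTa u hu, hTa v hv]
    · rw [hTa u hu]
  have hcol : ∀ l : Fin m, l = i ∨ l = j →
      (∑ u ∈ T, if G.Adj u l then a u ^ θ * x l ^ θ else 0) = x l ^ θ * S l := by
    intro l hl
    have h1 : (∑ u ∈ T, if G.Adj u l then a u ^ θ * x l ^ θ else 0)
        = x l ^ θ * ∑ u ∈ T, if G.Adj u l then a u ^ θ else 0 := by
      rw [Finset.mul_sum]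
      exact Finset.sum_congr rfl fun u _ => by
        rw [mul_ite, mul_zero, mul_comm]
    rw [h1]
    congr 1
    have h2 : (∑ u ∈ T, if G.Adj u l then a u ^ θ else 0)
        = ∑ u, if G.Adj u l then a u ^ θ else 0 := by
      refine Finset.sum_subset (Finset.subset_univ T) fun u _ hu => ?_
      have hu' : u = i ∨ u = j := by
        by_contra h
        push_neg at h
        exact hu ((hT u).2 h)
      have : ¬ G.Adj u l := by
        rcases hu' with rfl | rfl <;> rcases hl with rfl | rfl
        · exact G.irrefl
        · exact hnadj
        · exact fun h => hnadj h.symm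
        · exact G.irrefl
      rw [if_neg this]
    rw [h2, hSdef]
    exact Finset.sum_congr rfl fun u _ => by rw [G.adj_comm]
  calc (∑ u, ∑ v, if G.Adj u v then x u ^ θ * x v ^ θ else 0)
      = (∑ u ∈ T, ∑ v, if G.Adj u v then x u ^ θ * x v ^ θ else 0)
        + ((∑ v, if G.Adj i v then x i ^ θ * x v ^ θ else 0)
          + (∑ v, if G.Adj j v then x j ^ θ * x v ^ θ else 0)) :=
        hsplit _
    _ = ((∑ u ∈ T, ∑ v ∈ T, if G.Adj u v then a u ^ θ * a v ^ θ else 0)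
          + (x i ^ θ * S i + x j ^ θ * S j))
        + (x i ^ θ * S i + x j ^ θ * S j) := by
        rw [hrowi, hrowj]
        congr 1
        rw [Finset.sum_congr rfl hinner, Finset.sum_add_distrib, Finset.sum_add_distrib,
          hcol i (Or.inl rfl), hcol j (Or.inr rfl)]
    _ = _ := by ring

lemma mainbound {θ : ℝ} (hθ1 : 1 < θ) {k : ℕ} :
    ∀ (n m : ℕ) (G : SimpleGraph (Fin m)),
      (∀ s : Finset (Fin m), G.IsClique (s : Set (Fin m)) → s.card ≤ k) →
      ∀ a : Fin m → ℝ, (∀ i, 0 ≤ a i) → (∑ i, a i = 1) →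
      ((univ.filter (fun i => a i ≠ 0)).card ≤ n) →
      (∑ i, ∑ j, if G.Adj i j then a i ^ θ * a j ^ θ else 0) ≤ phiVar θ k := by
  intro n
  induction n with
  | zero =>
    intro m G hG a ha h1 hc
    exfalso
    have hall : ∀ u, a u = 0 := by
      intro u
      by_contra h
      have : u ∈ univ.filter (fun i => a i ≠ 0) := mem_filter.2 ⟨mem_univ u, h⟩
      have := Finset.card_eq_zero.1 (Nat.le_zero.1 hc)
      simp [this] at *
    rw [Finset.sum_eq_zero (fun u _ => hall u)] at h1
    norm_num at h1
  | succ n ih =>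
    intro m G hG a ha h1 hc
    by_cases hcl : G.IsClique ((univ.filter (fun i => a i ≠ 0) : Finset (Fin m)) : Set (Fin m))
    · exact cliquecase hθ1 G hG a ha h1 hcl
    · rw [SimpleGraph.isClique_iff, Set.Pairwise] at hcl
      push_neg at hcl
      obtain ⟨i, hi, j, hj, hne, hnadj⟩ := hcl
      rw [Finset.mem_coe, mem_filter] at hi hj
      have hθ0 : θ ≠ 0 := by linarith
      have hθ0' : (0:ℝ) ≤ θ := by linarith
      set S : Fin m → ℝ := fun u => ∑ v, if G.Adj u v then a v ^ θ else 0 with hSdef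
      have hSnn : ∀ u, 0 ≤ S u := fun u => Finset.sum_nonneg fun v _ => by
        split
        · exact Real.rpow_nonneg (ha v) θ
        · exact le_refl 0
      set R : ℝ := ∑ u ∈ univ \ {i, j}, ∑ v ∈ univ \ {i, j},
        if G.Adj u v then a u ^ θ * a v ^ θ else 0 with hRdef
      -- the two shifted vectors
      set b : Fin m → ℝ := Function.update (Function.update a j 0) i (a i + a j) with hbdef
      set c : Fin m → ℝ := Function.update (Function.update a i 0) j (a i + a j) with hcdef
      have hbi : b i = a i + a j := by rw [hbdef]; simp
      have hbj : b j = 0 := by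
        rw [hbdef, Function.update_of_ne (Ne.symm hne), Function.update_self]
      have hbo : ∀ v, v ≠ i → v ≠ j → b v = a v := by
        intro v hvi hvj
        rw [hbdef, Function.update_of_ne hvi, Function.update_of_ne hvj]
      have hci : c i = 0 := by
        rw [hcdef, Function.update_of_ne hne, Function.update_self]
      have hcj : c j = a i + a j := by rw [hcdef]; simp
      have hco : ∀ v, v ≠ i → v ≠ j → c v = a v := by
        intro v hvi hvj
        rw [hcdef, Function.update_of_ne hvj, Function.update_of_ne hvi]
      have hda := decomp (θ := θ) G hne hnadj a a (fun v _ _ => rfl)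
      have hdb := decomp (θ := θ) G hne hnadj a b hbo
      have hdc := decomp (θ := θ) G hne hnadj a c hco
      rw [hbi, hbj] at hdb
      rw [hci, hcj] at hdc
      rw [Real.zero_rpow hθ0] at hdb hdc
      have hb1 : ∑ u, b u = 1 := by
        have hrw : ∀ u, b u = a u + ((if u = i then a j else 0) - (if u = j then a j else 0)) := by
          intro u
          by_cases hu : u = i
          · subst hu; rw [hbi, if_pos rfl, if_neg hne]; ring
          by_cases hu' : u = j
          · subst hu'; rw [hbj, if_neg hu, if_pos rfl]; ring
          · rw [hbo u hu hu', if_neg hu, if_neg hu']; ring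
        rw [Finset.sum_congr rfl fun u _ => hrw u, Finset.sum_add_distrib, h1,
          Finset.sum_sub_distrib]
        simp
      have hc1 : ∑ u, c u = 1 := by
        have hrw : ∀ u, c u = a u + ((if u = j then a i else 0) - (if u = i then a i else 0)) := by
          intro u
          by_cases hu : u = i
          · subst hu; rw [hci, if_neg hne, if_pos rfl]; ring
          by_cases hu' : u = j
          · subst hu'; rw [hcj, if_pos rfl, if_neg hu]; ring
          · rw [hco u hu hu', if_neg hu', if_neg hu]; ring
        rw [Finset.sum_congr rfl fun u _ => hrw u, Finset.sum_add_distrib, h1,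
          Finset.sum_sub_distrib]
        simp
      have hbnn : ∀ u, 0 ≤ b u := by
        intro u
        by_cases hu : u = i
        · rw [hu, hbi]; exact add_nonneg (ha i) (ha j)
        by_cases hu' : u = j
        · subst hu'; rw [hbj]
        · rw [hbo u hu hu']; exact ha u
      have hcnn : ∀ u, 0 ≤ c u := by
        intro u
        by_cases hu : u = i
        · subst hu; rw [hci]
        by_cases hu' : u = j
        · rw [hu', hcj]; exact add_nonneg (ha i) (ha j)
        · rw [hco u hu hu']; exact ha u
      have hbsupp : (univ.filter (fun u => b u ≠ 0)).card ≤ n := by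
        have hsub : univ.filter (fun u => b u ≠ 0)
            ⊆ (univ.filter (fun u => a u ≠ 0)).erase j := by
          intro u hu
          rw [mem_filter] at hu
          by_cases huj : u = j
          · exact absurd (huj ▸ hbj) hu.2
          refine Finset.mem_erase.2 ⟨huj, mem_filter.2 ⟨mem_univ u, ?_⟩⟩
          by_cases hui : u = i
          · subst hui; exact hi.2
          · rw [← hbo u hui huj]; exact hu.2
        have := Finset.card_le_card hsub
        rw [Finset.card_erase_of_mem (mem_filter.2 ⟨mem_univ j, hj.2⟩)] at this
        omega
      have hcsupp : (univ.filter (fun u => c u ≠ 0)).card ≤ n := by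
        have hsub : univ.filter (fun u => c u ≠ 0)
            ⊆ (univ.filter (fun u => a u ≠ 0)).erase i := by
          intro u hu
          rw [mem_filter] at hu
          by_cases hui : u = i
          · exact absurd (hui ▸ hci) hu.2
          refine Finset.mem_erase.2 ⟨hui, mem_filter.2 ⟨mem_univ u, ?_⟩⟩
          by_cases huj : u = j
          · subst huj; exact hj.2
          · rw [← hco u hui huj]; exact hu.2
        have := Finset.card_le_card hsub
        rw [Finset.card_erase_of_mem (mem_filter.2 ⟨mem_univ i, hi.2⟩)] at this
        omega
      have hsup := superadd (le_of_lt hθ1) (ha i) (ha j)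
      by_cases hSij : S j ≤ S i
      · -- shift mass to i : bound by F b
        have hle : (∑ u, ∑ v, if G.Adj u v then a u ^ θ * a v ^ θ else 0)
            ≤ ∑ u, ∑ v, if G.Adj u v then b u ^ θ * b v ^ θ else 0 := by
          rw [hda, hdb]
          have h5 : a j ^ θ * S j ≤ a j ^ θ * S i :=
            mul_le_mul_of_nonneg_left hSij (Real.rpow_nonneg (ha j) θ)
          have h6 : (a i ^ θ + a j ^ θ) * S i ≤ (a i + a j) ^ θ * S i :=
            mul_le_mul_of_nonneg_right hsup (hSnn i)
          nlinarith [hSnn i, hSnn j]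
        exact le_trans hle (ih m G hG b hbnn hb1 hbsupp)
      · have hle : (∑ u, ∑ v, if G.Adj u v then a u ^ θ * a v ^ θ else 0)
            ≤ ∑ u, ∑ v, if G.Adj u v then c u ^ θ * c v ^ θ else 0 := by
          rw [hda, hdc]
          push_neg at hSij
          have h5 : a i ^ θ * S i ≤ a i ^ θ * S j :=
            mul_le_mul_of_nonneg_left (le_of_lt hSij) (Real.rpow_nonneg (ha i) θ)
          have h6 : (a i ^ θ + a j ^ θ) * S j ≤ (a i + a j) ^ θ * S j :=
            mul_le_mul_of_nonneg_right hsup (hSnn j)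
          nlinarith [hSnn i, hSnn j]
        exact le_trans hle (ih m G hG c hcnn hc1 hcsupp)

/-- `φ̂_θ(k)`: the supremum over all finite graphs `G` with maximum clique size `k` and
vectors `f` of unit `ℓ¹`-norm of `∑_{i ∼ j} |f i|^θ |f j|^θ` (ordered adjacent pairs). -/
noncomputable def phiHat (θ : ℝ) (k : ℕ) : ℝ :=
  sSup {x : ℝ | ∃ (m : ℕ) (G : SimpleGraph (Fin m)) (f : Fin m → ℝ),
    (∃ s : Finset (Fin m), G.IsNClique k s) ∧
    (∀ s : Finset (Fin m), G.IsClique (s : Set (Fin m)) → s.card ≤ k) ∧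
    (∑ i, |f i| = 1) ∧
    x = ∑ i : Fin m, ∑ j : Fin m,
      if G.Adj i j then |f i| ^ θ * |f j| ^ θ else 0}

/-- For `θ > 1`, the supremum over graphs with maximum clique size `k` equals `φ_θ(k)`:
the supremum is attained at the complete graph on `k` vertices. -/
theorem phiHat_eq_phiVar (θ : ℝ) (hθ : 1 < θ) (k : ℕ) (hk : 2 ≤ k) :
    phiHat θ k = phiVar θ k := by
  have hbdd := bddrange hθ k
  haveI : NeZero k := ⟨by omega⟩
  have hv₀ : ∑ i : Fin k, |if i = 0 then (1:ℝ) else 0| = 1 := by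
    simp [apply_ite abs]
  set v₀ : {v : Fin k → ℝ // ∑ i, |v i| = 1} := ⟨fun i => if i = 0 then 1 else 0, hv₀⟩
  haveI : Nonempty {v : Fin k → ℝ // ∑ i, |v i| = 1} := ⟨v₀⟩
  have hub : ∀ x ∈ {x : ℝ | ∃ (m : ℕ) (G : SimpleGraph (Fin m)) (f : Fin m → ℝ),
      (∃ s : Finset (Fin m), G.IsNClique k s) ∧
      (∀ s : Finset (Fin m), G.IsClique (s : Set (Fin m)) → s.card ≤ k) ∧
      (∑ i, |f i| = 1) ∧
      x = ∑ i : Fin m, ∑ j : Fin m,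
        if G.Adj i j then |f i| ^ θ * |f j| ^ θ else 0}, x ≤ phiVar θ k := by
    rintro x ⟨m, G, f, -, hG, hf, rfl⟩
    exact mainbound hθ m m G hG (fun i => |f i|) (fun i => abs_nonneg _) hf
      (le_trans (Finset.card_filter_le _ _) (by simp))
  rw [phiHat]
  apply le_antisymm
  · apply Real.sSup_le hub
    have h0 : (0:ℝ) ≤ ∑ i : Fin k, ∑ j : Fin k,
        if i ≠ j then |v₀.1 i| ^ θ * |v₀.1 j| ^ θ else 0 :=
      Finset.sum_nonneg fun i _ => Finset.sum_nonneg fun j _ => by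
        split
        · exact mul_nonneg (Real.rpow_nonneg (abs_nonneg _) θ)
            (Real.rpow_nonneg (abs_nonneg _) θ)
        · exact le_refl 0
    exact le_trans h0 (le_ciSup hbdd v₀)
  · rw [phiVar]
    refine ciSup_le fun v => ?_
    refine le_csSup ⟨phiVar θ k, fun x hx => hub x hx⟩ ?_
    refine ⟨k, ⊤, v.1, ⟨univ, ?_⟩, fun s _ => ?_, v.2, ?_⟩
    · refine (SimpleGraph.isNClique_iff _).2 ⟨fun x _ y _ hxy => (SimpleGraph.top_adj x y).2 hxy, by simp⟩
    · exact le_trans (Finset.card_le_univ s) (by simp)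
    · simp only [SimpleGraph.top_adj]
end

section
/- Let 1 < p < 2 with conjugate exponent q = p/(p−1), and let G be a graph on [n] with maximum clique size k. Then for any vector f ∈ ℝ^n with ‖f‖₂ = 1, Σ_{i∼j} |f_i|^q |f_j|^q ≤ φ_{q/2}(k), where the sum is over ordered adjacent pairs. -/
open Finset

lemma rpow_superadd {a b θ : ℝ} (ha : 0 ≤ a) (hb : 0 ≤ b) (hθ : 1 ≤ θ) :
    a ^ θ + b ^ θ ≤ (a + b) ^ θ := by
  lift a to NNReal using ha
  lift b to NNReal using hb
  have := NNReal.add_rpow_le_rpow_add a b hθ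
  exact_mod_cast this

lemma phiVar_bdd (θ : ℝ) (hθ : 1 ≤ θ) (k : ℕ) :
    BddAbove (Set.range fun v : {v : Fin k → ℝ // ∑ i, |v i| = 1} =>
      ∑ i : Fin k, ∑ j : Fin k, if i ≠ j then |v.1 i| ^ θ * |v.1 j| ^ θ else 0) := by
  refine ⟨1, ?_⟩
  rintro _ ⟨⟨v, hv⟩, rfl⟩
  have h1 : ∀ i : Fin k, |v i| ^ θ ≤ |v i| := by
    intro i
    rcases eq_or_lt_of_le (abs_nonneg (v i)) with h | h
    · rw [← h, Real.zero_rpow (by linarith)]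
    · have hle : |v i| ≤ 1 := by
        rw [← hv]
        exact Finset.single_le_sum (fun j _ => abs_nonneg (v j)) (mem_univ i)
      calc |v i| ^ θ ≤ |v i| ^ (1:ℝ) := Real.rpow_le_rpow_of_exponent_ge h hle hθ
        _ = |v i| := Real.rpow_one _
  have h2 : ∑ i : Fin k, |v i| ^ θ ≤ 1 := by
    rw [← hv]; exact Finset.sum_le_sum fun i _ => h1 i
  calc (∑ i : Fin k, ∑ j : Fin k, if i ≠ j then |v i| ^ θ * |v j| ^ θ else 0)
      ≤ ∑ i : Fin k, ∑ j : Fin k, |v i| ^ θ * |v j| ^ θ := by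
        refine Finset.sum_le_sum fun i _ => Finset.sum_le_sum fun j _ => ?_
        split
        · exact le_refl _
        · positivity
    _ = (∑ i : Fin k, |v i| ^ θ) * (∑ j : Fin k, |v j| ^ θ) := by
        rw [Finset.sum_mul]
        exact Finset.sum_congr rfl fun i _ => (Finset.mul_sum _ _ _).symm
    _ ≤ 1 := by
        have h0 : 0 ≤ ∑ i : Fin k, |v i| ^ θ := Finset.sum_nonneg fun i _ => by positivity
        exact mul_le_one₀ h2 h0 h2

set_option maxHeartbeats 1000000 in
lemma motzkin_straus {n k : ℕ} (θ : ℝ) (hθ : 1 ≤ θ)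
    (G : SimpleGraph (Fin n)) [DecidableRel G.Adj]
    (hmax : ∀ s : Finset (Fin n), G.IsClique (s : Set (Fin n)) → s.card ≤ k) :
    ∀ m : ℕ, ∀ x : Fin n → ℝ, (∀ i, 0 ≤ x i) → (∑ i, x i = 1) →
      (Finset.univ.filter (fun i => x i ≠ 0)).card ≤ m →
      (∑ i, ∑ j, if G.Adj i j then x i ^ θ * x j ^ θ else 0) ≤ phiVar θ k := by
  have hθ0 : θ ≠ 0 := by linarith
  intro m
  induction m with
  | zero =>
    intro x hx hsum hcard
    exfalso
    have hz : ∀ i, x i = 0 := by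
      intro i
      by_contra h
      have hmem : i ∈ Finset.univ.filter (fun i => x i ≠ 0) := by simp [h]
      have := Finset.card_pos.mpr ⟨i, hmem⟩
      omega
    rw [Finset.sum_congr rfl (fun i _ => hz i)] at hsum
    simp at hsum
  | succ m ih =>
    intro x hx hsum hcard
    set Sx := Finset.univ.filter (fun i => x i ≠ 0) with hSx
    by_cases hcl : ∀ i ∈ Sx, ∀ j ∈ Sx, i ≠ j → G.Adj i j
    · -- support is a clique
      have hcard_k : Sx.card ≤ k := hmax Sx (fun a ha b hb hab =>
        hcl a (Finset.mem_coe.mp ha) b (Finset.mem_coe.mp hb) hab)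
      set ι : {a // a ∈ Sx} → Fin k := fun a => Fin.castLE hcard_k (Sx.equivFin a) with hι_def
      have hι : Function.Injective ι := fun a b h =>
        Sx.equivFin.injective (Fin.castLE_injective hcard_k h)
      set v : Fin k → ℝ := fun t => ∑ a : {a // a ∈ Sx}, if ι a = t then x a.1 else 0 with hv_def
      have hv_nonneg : ∀ t, 0 ≤ v t := fun t =>
        Finset.sum_nonneg fun a _ => by split_ifs <;> [exact hx a.1; exact le_refl 0]
      have hv_at : ∀ a : {a // a ∈ Sx}, v (ι a) = x a.1 := by
        intro a
        rw [hv_def]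
        simp only [hι.eq_iff]
        simp
      have hv_zero : ∀ t : Fin k, t ∉ Finset.image ι Finset.univ → v t = 0 := by
        intro t ht
        apply Finset.sum_eq_zero
        intro a _
        rw [if_neg]
        intro h
        exact ht (Finset.mem_image.mpr ⟨a, Finset.mem_univ a, h⟩)
      have hv_sum : ∑ t, |v t| = 1 := by
        have habs : ∀ t, |v t| = v t := fun t => abs_of_nonneg (hv_nonneg t)
        calc ∑ t, |v t| = ∑ t, v t := Finset.sum_congr rfl fun t _ => habs t
          _ = ∑ a : {a // a ∈ Sx}, ∑ t, (if ι a = t then x a.1 else 0) := Finset.sum_comm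
          _ = ∑ a : {a // a ∈ Sx}, x a.1 := by
              refine Finset.sum_congr rfl fun a _ => ?_
              simp
          _ = ∑ u ∈ Sx, x u := by rw [Finset.univ_eq_attach, Finset.sum_attach]
          _ = ∑ u, x u := by
              refine Finset.sum_subset (Finset.subset_univ Sx) fun u _ hu => ?_
              simpa [hSx] using hu
          _ = 1 := hsum
      -- restrict the adjacency sum to the support
      have e1 : (∑ u, ∑ w, if G.Adj u w then x u ^ θ * x w ^ θ else 0)
          = ∑ u ∈ Sx, ∑ w ∈ Sx, if G.Adj u w then x u ^ θ * x w ^ θ else 0 := by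
        rw [← Finset.sum_subset (Finset.subset_univ Sx) (fun u _ hu => ?_)]
        · refine Finset.sum_congr rfl fun u _ => ?_
          refine (Finset.sum_subset (Finset.subset_univ Sx) fun w _ hw => ?_).symm
          have hw0 : x w = 0 := by simpa [hSx] using hw
          rw [hw0, Real.zero_rpow hθ0, mul_zero]
          simp
        · have hu0 : x u = 0 := by simpa [hSx] using hu
          refine Finset.sum_eq_zero fun w _ => ?_
          rw [hu0, Real.zero_rpow hθ0, zero_mul]
          simp
      have e2 : (∑ u ∈ Sx, ∑ w ∈ Sx, if G.Adj u w then x u ^ θ * x w ^ θ else 0)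
          ≤ ∑ u ∈ Sx, ∑ w ∈ Sx, if u ≠ w then x u ^ θ * x w ^ θ else 0 := by
        refine Finset.sum_le_sum fun u _ => Finset.sum_le_sum fun w _ => ?_
        by_cases h1 : G.Adj u w
        · rw [if_pos h1, if_pos (G.ne_of_adj h1)]
        · rw [if_neg h1]
          split_ifs with h2
          · exact mul_nonneg (Real.rpow_nonneg (hx u) θ) (Real.rpow_nonneg (hx w) θ)
          · exact le_refl 0
      have e3 : (∑ u ∈ Sx, ∑ w ∈ Sx, if u ≠ w then x u ^ θ * x w ^ θ else 0)
          = ∑ t : Fin k, ∑ t' : Fin k, if t ≠ t' then |v t| ^ θ * |v t'| ^ θ else 0 := by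
        have hR : ∀ t : Fin k, t ∉ Finset.image ι Finset.univ → |v t| ^ θ = 0 := by
          intro t ht; rw [hv_zero t ht, abs_zero, Real.zero_rpow hθ0]
        have step1 : (∑ t : Fin k, ∑ t' : Fin k, if t ≠ t' then |v t| ^ θ * |v t'| ^ θ else 0)
            = ∑ t ∈ Finset.image ι Finset.univ, ∑ t' ∈ Finset.image ι Finset.univ,
                (if t ≠ t' then |v t| ^ θ * |v t'| ^ θ else 0) := by
          rw [← Finset.sum_subset (Finset.subset_univ (Finset.image ι Finset.univ))
            (fun t _ ht => Finset.sum_eq_zero fun t' _ => by simp [hR t ht])]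
          refine Finset.sum_congr rfl fun t _ => ?_
          refine (Finset.sum_subset (Finset.subset_univ (Finset.image ι Finset.univ))
            fun t' _ ht' => ?_).symm
          simp [hR t' ht']
        have hinj : ∀ a ∈ (Finset.univ : Finset {a // a ∈ Sx}), ∀ b ∈ Finset.univ,
            ι a = ι b → a = b := fun a _ b _ h => hι h
        have step2 : (∑ t ∈ Finset.image ι Finset.univ, ∑ t' ∈ Finset.image ι Finset.univ,
                (if t ≠ t' then |v t| ^ θ * |v t'| ^ θ else 0))
            = ∑ a : {a // a ∈ Sx}, ∑ b : {a // a ∈ Sx},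
                (if a ≠ b then x a.1 ^ θ * x b.1 ^ θ else 0) := by
          rw [Finset.sum_image hinj]
          refine Finset.sum_congr rfl fun a _ => ?_
          rw [Finset.sum_image hinj]
          refine Finset.sum_congr rfl fun b _ => ?_
          rw [hv_at a, hv_at b, abs_of_nonneg (hx a.1), abs_of_nonneg (hx b.1)]
          congr 1
          simp [hι.ne_iff]
        have step3 : (∑ a : {a // a ∈ Sx}, ∑ b : {a // a ∈ Sx},
                (if a ≠ b then x a.1 ^ θ * x b.1 ^ θ else 0))
            = ∑ u ∈ Sx, ∑ w ∈ Sx, (if u ≠ w then x u ^ θ * x w ^ θ else 0) := by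
          rw [Finset.univ_eq_attach]
          rw [show (∑ a ∈ Sx.attach, ∑ b ∈ Sx.attach, (if a ≠ b then x a.1 ^ θ * x b.1 ^ θ else 0))
              = ∑ a ∈ Sx.attach, ∑ b ∈ Sx.attach, (if a.1 ≠ b.1 then x a.1 ^ θ * x b.1 ^ θ else 0) from
            Finset.sum_congr rfl fun a _ => Finset.sum_congr rfl fun b _ => by
              congr 1
              exact propext (not_congr Subtype.ext_iff)]
          rw [Finset.sum_attach Sx (fun u => ∑ b ∈ Sx.attach, (if u ≠ b.1 then x u ^ θ * x b.1 ^ θ else 0))]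
          refine Finset.sum_congr rfl fun u _ => ?_
          exact Finset.sum_attach Sx (fun w => if u ≠ w then x u ^ θ * x w ^ θ else 0)
        rw [step1, step2, step3]
      rw [e1]
      refine le_trans e2 ?_
      rw [e3]
      exact le_ciSup (phiVar_bdd θ hθ k) ⟨v, hv_sum⟩
    · -- support is not a clique: shift mass
      push_neg at hcl
      obtain ⟨i, hiS, j, hjS, hij, hnadj⟩ := hcl
      have hxi : x i ≠ 0 := by simpa [hSx] using hiS
      have hxj : x j ≠ 0 := by simpa [hSx] using hjS
      set D : Finset (Fin n) := Finset.univ \ {i, j} with hD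
      set A := ∑ w ∈ D, (if G.Adj i w then x w ^ θ else 0) with hA
      set B := ∑ w ∈ D, (if G.Adj j w then x w ^ θ else 0) with hB
      set C := ∑ u ∈ D, ∑ w ∈ D, (if G.Adj u w then x u ^ θ * x w ^ θ else 0) with hC
      have hjD : j ∉ D := by simp [hD]
      have hinsj : i ∉ insert j D := by simp [hD, hij]
      have huniv : (Finset.univ : Finset (Fin n)) = insert i (insert j D) := by
        ext l
        simp only [Finset.mem_univ, Finset.mem_insert, hD, Finset.mem_sdiff,
          Finset.mem_insert, Finset.mem_singleton, true_iff, true_and]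
        tauto
      have formula : ∀ y : Fin n → ℝ, (∀ l ∈ D, y l = x l) →
          (∑ u, ∑ w, if G.Adj u w then y u ^ θ * y w ^ θ else 0)
            = C + 2 * y i ^ θ * A + 2 * y j ^ θ * B := by
        intro y hy
        have hii : (if G.Adj i i then y i ^ θ * y i ^ θ else 0) = 0 := if_neg (G.irrefl)
        have hjj : (if G.Adj j j then y j ^ θ * y j ^ θ else 0) = 0 := if_neg (G.irrefl)
        have hij' : (if G.Adj i j then y i ^ θ * y j ^ θ else 0) = 0 := if_neg hnadj
        have hji' : (if G.Adj j i then y j ^ θ * y i ^ θ else 0) = 0 :=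
          if_neg (fun h => hnadj h.symm)
        have hiA : ∑ w ∈ D, (if G.Adj i w then y i ^ θ * y w ^ θ else 0) = y i ^ θ * A := by
          rw [hA, Finset.mul_sum]
          refine Finset.sum_congr rfl fun w hw => ?_
          rw [hy w hw]
          split <;> ring
        have hAi : ∑ u ∈ D, (if G.Adj u i then y u ^ θ * y i ^ θ else 0) = y i ^ θ * A := by
          rw [hA, Finset.mul_sum]
          refine Finset.sum_congr rfl fun w hw => ?_
          rw [hy w hw]
          by_cases h : G.Adj i w
          · rw [if_pos h, if_pos (h.symm)]; ring
          · rw [if_neg h, if_neg (fun h' => h h'.symm)]; ring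
        have hjB : ∑ w ∈ D, (if G.Adj j w then y j ^ θ * y w ^ θ else 0) = y j ^ θ * B := by
          rw [hB, Finset.mul_sum]
          refine Finset.sum_congr rfl fun w hw => ?_
          rw [hy w hw]
          split <;> ring
        have hBj : ∑ u ∈ D, (if G.Adj u j then y u ^ θ * y j ^ θ else 0) = y j ^ θ * B := by
          rw [hB, Finset.mul_sum]
          refine Finset.sum_congr rfl fun w hw => ?_
          rw [hy w hw]
          by_cases h : G.Adj j w
          · rw [if_pos h, if_pos (h.symm)]; ring
          · rw [if_neg h, if_neg (fun h' => h h'.symm)]; ring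
        have hCC : ∑ u ∈ D, ∑ w ∈ D, (if G.Adj u w then y u ^ θ * y w ^ θ else 0) = C := by
          rw [hC]
          refine Finset.sum_congr rfl fun u hu => Finset.sum_congr rfl fun w hw => ?_
          rw [hy u hu, hy w hw]
        rw [huniv]
        simp only [Finset.sum_insert hinsj, Finset.sum_insert hjD, Finset.sum_add_distrib]
        rw [hii, hjj, hij', hji', hiA, hAi, hjB, hBj, hCC]
        ring
      have hfx := formula x (fun l _ => rfl)
      set s := x i + x j with hs
      set x1 := Function.update (Function.update x i s) j 0 with hx1
      set x2 := Function.update (Function.update x j s) i 0 with hx2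
      have hx1i : x1 i = s := by
        rw [hx1, Function.update_of_ne hij, Function.update_self]
      have hx1j : x1 j = 0 := by rw [hx1, Function.update_self]
      have hx2j : x2 j = s := by
        rw [hx2, Function.update_of_ne (Ne.symm hij), Function.update_self]
      have hx2i : x2 i = 0 := by rw [hx2, Function.update_self]
      have hx1D : ∀ l ∈ D, x1 l = x l := by
        intro l hl
        simp only [hD, Finset.mem_sdiff, Finset.mem_insert, Finset.mem_singleton] at hl
        push_neg at hl
        rw [hx1, Function.update_of_ne hl.2.2, Function.update_of_ne hl.2.1]
      have hx2D : ∀ l ∈ D, x2 l = x l := by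
        intro l hl
        simp only [hD, Finset.mem_sdiff, Finset.mem_insert, Finset.mem_singleton] at hl
        push_neg at hl
        rw [hx2, Function.update_of_ne hl.2.1, Function.update_of_ne hl.2.2]
      have hfx1 := formula x1 hx1D
      have hfx2 := formula x2 hx2D
      rw [hx1i, hx1j, Real.zero_rpow hθ0] at hfx1
      rw [hx2i, hx2j, Real.zero_rpow hθ0] at hfx2
      have hx1n : ∀ l, 0 ≤ x1 l := by
        intro l
        rcases eq_or_ne l j with rfl | hlj
        · rw [hx1j]
        · rcases eq_or_ne l i with rfl | hli
          · rw [hx1i, hs]; exact add_nonneg (hx _) (hx _)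
          · rw [hx1, Function.update_of_ne hlj, Function.update_of_ne hli]; exact hx l
      have hx2n : ∀ l, 0 ≤ x2 l := by
        intro l
        rcases eq_or_ne l i with rfl | hli
        · rw [hx2i]
        · rcases eq_or_ne l j with rfl | hlj
          · rw [hx2j, hs]; exact add_nonneg (hx _) (hx _)
          · rw [hx2, Function.update_of_ne hli, Function.update_of_ne hlj]; exact hx l
      have hiDj : i ∈ Finset.univ \ ({j} : Finset (Fin n)) := by simp [hij]
      -- sums are preserved
      have hsum_split : ∑ l, x l = x j + (x i + ∑ l ∈ (Finset.univ \ {j}) \ {i}, x l) := by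
        rw [← Finset.add_sum_erase Finset.univ x (Finset.mem_univ j)]
        rw [show (Finset.univ.erase j) = Finset.univ \ {j} from by ext l; simp [Finset.mem_erase]]
        rw [← Finset.add_sum_erase (Finset.univ \ {j}) x hiDj]
        rw [show ((Finset.univ \ {j}).erase i) = (Finset.univ \ {j}) \ {i} from by
          ext l; simp [Finset.mem_erase]; tauto]
      have hx1sum : ∑ l, x1 l = 1 := by
        rw [← Finset.add_sum_erase Finset.univ x1 (Finset.mem_univ j), hx1j]
        rw [show (Finset.univ.erase j) = Finset.univ \ {j} from by ext l; simp [Finset.mem_erase]]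
        rw [← Finset.add_sum_erase (Finset.univ \ {j}) x1 hiDj, hx1i]
        rw [show ((Finset.univ \ {j}).erase i) = (Finset.univ \ {j}) \ {i} from by
          ext l; simp [Finset.mem_erase]; tauto]
        have : ∑ l ∈ (Finset.univ \ {j}) \ {i}, x1 l = ∑ l ∈ (Finset.univ \ {j}) \ {i}, x l := by
          refine Finset.sum_congr rfl fun l hl => ?_
          simp only [Finset.mem_sdiff, Finset.mem_singleton] at hl
          rw [hx1, Function.update_of_ne hl.1.2, Function.update_of_ne hl.2]
        rw [this, hs]
        rw [hsum_split] at hsum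
        linarith
      have hjDi : j ∈ Finset.univ \ ({i} : Finset (Fin n)) := by
        simp only [Finset.mem_sdiff, Finset.mem_univ, Finset.mem_singleton, true_and]
        exact hij.symm
      have hsum_split2 : ∑ l, x l = x i + (x j + ∑ l ∈ (Finset.univ \ {i}) \ {j}, x l) := by
        rw [← Finset.add_sum_erase Finset.univ x (Finset.mem_univ i)]
        rw [show (Finset.univ.erase i) = Finset.univ \ {i} from by ext l; simp [Finset.mem_erase]]
        rw [← Finset.add_sum_erase (Finset.univ \ {i}) x hjDi]
        rw [show ((Finset.univ \ {i}).erase j) = (Finset.univ \ {i}) \ {j} from by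
          ext l; simp [Finset.mem_erase]; tauto]
      have hx2sum : ∑ l, x2 l = 1 := by
        rw [← Finset.add_sum_erase Finset.univ x2 (Finset.mem_univ i), hx2i]
        rw [show (Finset.univ.erase i) = Finset.univ \ {i} from by ext l; simp [Finset.mem_erase]]
        rw [← Finset.add_sum_erase (Finset.univ \ {i}) x2 hjDi, hx2j]
        rw [show ((Finset.univ \ {i}).erase j) = (Finset.univ \ {i}) \ {j} from by
          ext l; simp [Finset.mem_erase]; tauto]
        have : ∑ l ∈ (Finset.univ \ {i}) \ {j}, x2 l = ∑ l ∈ (Finset.univ \ {i}) \ {j}, x l := by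
          refine Finset.sum_congr rfl fun l hl => ?_
          simp only [Finset.mem_sdiff, Finset.mem_singleton] at hl
          rw [hx2, Function.update_of_ne hl.1.2, Function.update_of_ne hl.2]
        rw [this, hs]
        rw [hsum_split2] at hsum
        linarith
      -- supports shrink
      have hsupp1 : (Finset.univ.filter (fun l => x1 l ≠ 0)).card ≤ m := by
        have hsub : Finset.univ.filter (fun l => x1 l ≠ 0) ⊆ Sx.erase j := by
          intro l hl
          simp only [Finset.mem_filter, Finset.mem_univ, true_and] at hl
          rw [Finset.mem_erase]
          have hlj : l ≠ j := by rintro rfl; exact hl hx1j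
          refine ⟨hlj, ?_⟩
          rcases eq_or_ne l i with rfl | hli
          · exact hiS
          · rw [hSx, Finset.mem_filter]
            refine ⟨Finset.mem_univ l, ?_⟩
            rw [hx1, Function.update_of_ne hlj, Function.update_of_ne hli] at hl
            exact hl
        calc (Finset.univ.filter (fun l => x1 l ≠ 0)).card ≤ (Sx.erase j).card :=
              Finset.card_le_card hsub
          _ = Sx.card - 1 := Finset.card_erase_of_mem hjS
          _ ≤ m := by omega
      have hsupp2 : (Finset.univ.filter (fun l => x2 l ≠ 0)).card ≤ m := by
        have hsub : Finset.univ.filter (fun l => x2 l ≠ 0) ⊆ Sx.erase i := by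
          intro l hl
          simp only [Finset.mem_filter, Finset.mem_univ, true_and] at hl
          rw [Finset.mem_erase]
          have hli : l ≠ i := by rintro rfl; exact hl hx2i
          refine ⟨hli, ?_⟩
          rcases eq_or_ne l j with rfl | hlj
          · exact hjS
          · rw [hSx, Finset.mem_filter]
            refine ⟨Finset.mem_univ l, ?_⟩
            rw [hx2, Function.update_of_ne hli, Function.update_of_ne hlj] at hl
            exact hl
        calc (Finset.univ.filter (fun l => x2 l ≠ 0)).card ≤ (Sx.erase i).card :=
              Finset.card_le_card hsub
          _ = Sx.card - 1 := Finset.card_erase_of_mem hiS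
          _ ≤ m := by omega
      have h1 := ih x1 hx1n hx1sum hsupp1
      have h2 := ih x2 hx2n hx2sum hsupp2
      -- nonnegativity facts
      have hA0 : 0 ≤ A := by
        rw [hA]
        refine Finset.sum_nonneg fun w _ => ?_
        split_ifs
        · exact Real.rpow_nonneg (hx w) θ
        · exact le_refl 0
      have hB0 : 0 ≤ B := by
        rw [hB]
        refine Finset.sum_nonneg fun w _ => ?_
        split_ifs
        · exact Real.rpow_nonneg (hx w) θ
        · exact le_refl 0
      have hxiθ : 0 ≤ x i ^ θ := Real.rpow_nonneg (hx i) θ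
      have hxjθ : 0 ≤ x j ^ θ := Real.rpow_nonneg (hx j) θ
      have hss : x i ^ θ + x j ^ θ ≤ s ^ θ := by
        rw [hs]; exact rpow_superadd (hx i) (hx j) hθ
      clear_value A B C s x1 x2
      rcases le_total A B with hAB | hAB
      · refine le_trans ?_ h2
        rw [hfx, hfx2]
        nlinarith [mul_le_mul_of_nonneg_left hAB hxiθ, mul_le_mul_of_nonneg_left hss hB0]
      · refine le_trans ?_ h1
        rw [hfx, hfx1]
        nlinarith [mul_le_mul_of_nonneg_left hAB hxjθ, mul_le_mul_of_nonneg_left hss hA0]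

/-- For `1 < p < 2` with conjugate `q = p/(p−1)`, and `G` a graph on `[n]` with maximum
clique size `k`, for any `f` with `‖f‖₂ = 1`,
`∑_{i∼j} |f i|^q |f j|^q ≤ φ_{q/2}(k)` (sum over ordered adjacent pairs). -/
theorem sum_adj_pow_le_phiVar {n : ℕ}
    (p : ℝ) (hp1 : 1 < p) (hp2 : p < 2) (q : ℝ) (hq : q = p / (p - 1))
    (k : ℕ) (hk : 2 ≤ k)
    (G : SimpleGraph (Fin n)) [DecidableRel G.Adj]
    (hclique_ex : ∃ s : Finset (Fin n), G.IsNClique k s)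
    (hclique_max : ∀ s : Finset (Fin n), G.IsClique (s : Set (Fin n)) → s.card ≤ k)
    (f : Fin n → ℝ) (hf : ∑ i, (f i) ^ 2 = 1) :
    (∑ i : Fin n, ∑ j : Fin n,
        if G.Adj i j then |f i| ^ q * |f j| ^ q else 0) ≤ phiVar (q / 2) k := by
  have hq2 : 2 < q := by
    rw [hq, lt_div_iff₀ (by linarith)]
    linarith
  have hθ : 1 ≤ q / 2 := by linarith
  have hpow : ∀ i, (f i ^ 2 : ℝ) ^ (q / 2 : ℝ) = |f i| ^ q := by
    intro i
    rw [← sq_abs, ← Real.rpow_natCast |f i| 2, ← Real.rpow_mul (abs_nonneg _)]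
    ring_nf
  have hmain := motzkin_straus (q / 2) hθ G hclique_max n (fun i => f i ^ 2)
    (fun i => sq_nonneg (f i)) hf
    (le_trans (Finset.card_filter_le _ _) (by simp))
  refine le_trans (le_of_eq ?_) hmain
  refine Finset.sum_congr rfl fun i _ => Finset.sum_congr rfl fun j _ => ?_
  rw [hpow i, hpow j]
end
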